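/- Let α > 0, let A be a finite set of m×m matrices with nonnegative real entries, let v ∈ (ℝ≥0)^m, and let X ⊆ (ℝ≥0)^m be a bounded set such that v ∈ conv≤(X) and for every x ∈ X and M ∈ A, (1/α)·M·x ∈ conv≤(X), where conv≤(X) = {y ∈ (ℝ≥0)^m : ∃ y' ∈ conv(X), y ≤ y' coordinatewise}. Then for every p ∈ (ℝ≥0)^m there exists C such that for all n and all M₁,…,Mₙ ∈ A, p · (M₁⋯Mₙ · v) < C·αⁿ. -/

import Mathlib

open Matrix

/-- `conv≤(X)`: nonnegative vectors dominated coordinatewise by some point of the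
convex hull of `X`. -/
def convLe (m : ℕ) (X : Set (Fin m → ℝ)) : Set (Fin m → ℝ) :=
  {y | (∀ i, 0 ≤ y i) ∧ ∃ y' ∈ convexHull ℝ X, ∀ i, y i ≤ y' i}

lemma convLe_convex (m : ℕ) (X : Set (Fin m → ℝ)) : Convex ℝ (convLe m X) := by
  rintro y ⟨hy0, y', hy', hyle⟩ z ⟨hz0, z', hz', hzle⟩ a b ha hb hab
  refine ⟨fun i => add_nonneg (mul_nonneg ha (hy0 i)) (mul_nonneg hb (hz0 i)), a • y' + b • z',
    (convex_convexHull ℝ X) hy' hz' ha hb hab, fun i => ?_⟩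
  simp only [Pi.add_apply, Pi.smul_apply, smul_eq_mul]
  have := mul_le_mul_of_nonneg_left (hyle i) ha
  have := mul_le_mul_of_nonneg_left (hzle i) hb
  linarith

lemma convLe_step (m : ℕ) (α : ℝ) (hα : 0 < α)
    (X : Set (Fin m → ℝ))
    (M : Matrix (Fin m) (Fin m) ℝ) (hM : ∀ i j, 0 ≤ M i j)
    (hstep : ∀ x ∈ X, α⁻¹ • (M *ᵥ x) ∈ convLe m X)
    (y : Fin m → ℝ) (hy : y ∈ convLe m X) :
    α⁻¹ • (M *ᵥ y) ∈ convLe m X := by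
  obtain ⟨hy0, y', hy', hyle⟩ := hy
  -- f is the linear map x ↦ α⁻¹ • (M *ᵥ x)
  set f : (Fin m → ℝ) →ₗ[ℝ] (Fin m → ℝ) := α⁻¹ • M.mulVecLin with hf
  have hfx : ∀ x, f x = α⁻¹ • (M *ᵥ x) := fun x => rfl
  have hsub : convexHull ℝ X ⊆ f ⁻¹' (convLe m X) := by
    apply convexHull_min
    · intro x hx
      simpa [hfx] using hstep x hx
    · exact (convLe_convex m X).linear_preimage f
  have hfy' : f y' ∈ convLe m X := hsub hy'
  obtain ⟨hfy'0, z, hz, hzle⟩ := hfy'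
  have hmono : ∀ i, (M *ᵥ y) i ≤ (M *ᵥ y') i := by
    intro i
    simp only [Matrix.mulVec, dotProduct]
    exact Finset.sum_le_sum fun j _ => mul_le_mul_of_nonneg_left (hyle j) (hM i j)
  refine ⟨fun i => ?_, z, hz, fun i => ?_⟩
  · have : 0 ≤ (M *ᵥ y) i := by
      simp only [Matrix.mulVec, dotProduct]
      exact Finset.sum_nonneg fun j _ => mul_nonneg (hM i j) (hy0 j)
    have : 0 ≤ α⁻¹ * (M *ᵥ y) i := mul_nonneg (by positivity) this
    simpa using this
  · have h1 : α⁻¹ * (M *ᵥ y) i ≤ α⁻¹ * (M *ᵥ y') i :=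
      mul_le_mul_of_nonneg_left (hmono i) (by positivity)
    have h2 : α⁻¹ * (M *ᵥ y') i ≤ z i := by
      have := hzle i
      simpa [hfx] using this
    calc (α⁻¹ • (M *ᵥ y)) i = α⁻¹ * (M *ᵥ y) i := rfl
      _ ≤ z i := h1.trans h2

theorem convLe_matrix_bound (m : ℕ) (α : ℝ) (hα : 0 < α)
    (A : Finset (Matrix (Fin m) (Fin m) ℝ))
    (hA : ∀ M ∈ A, ∀ i j, 0 ≤ M i j)
    (v : Fin m → ℝ) (hv : ∀ i, 0 ≤ v i)
    (X : Set (Fin m → ℝ)) (hXnn : ∀ x ∈ X, ∀ i, 0 ≤ x i)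
    (hXbdd : Bornology.IsBounded X)
    (hvX : v ∈ convLe m X)
    (hstep : ∀ x ∈ X, ∀ M ∈ A, α⁻¹ • (M *ᵥ x) ∈ convLe m X)
    (p : Fin m → ℝ) (hp : ∀ i, 0 ≤ p i) :
    ∃ C : ℝ, ∀ (n : ℕ) (M : Fin n → Matrix (Fin m) (Fin m) ℝ),
      (∀ i, M i ∈ A) → p ⬝ᵥ ((List.ofFn M).prod *ᵥ v) < C * α ^ n := by
  -- bound on the convex hull
  have hhull : Bornology.IsBounded (convexHull ℝ X) := isBounded_convexHull.mpr hXbdd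
  obtain ⟨B, hB⟩ := hhull.exists_norm_le
  -- every element of convLe is coordinatewise ≤ B
  have hcoord : ∀ y ∈ convLe m X, ∀ i, y i ≤ B := by
    rintro y ⟨hy0, y', hy', hyle⟩ i
    have h1 : y' i ≤ |y' i| := le_abs_self _
    have h2 : |y' i| ≤ ‖y'‖ := by
      simpa using norm_le_pi_norm y' i
    exact (hyle i).trans (h1.trans (h2.trans (hB y' hy')))
  -- key induction
  have key : ∀ (n : ℕ) (M : Fin n → Matrix (Fin m) (Fin m) ℝ), (∀ i, M i ∈ A) →
      (α ^ n)⁻¹ • ((List.ofFn M).prod *ᵥ v) ∈ convLe m X := by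
    intro n
    induction n with
    | zero => intro M _; simpa using hvX
    | succ n ih =>
      intro M hM
      have hlist : List.ofFn M = M 0 :: List.ofFn (fun i : Fin n => M i.succ) := by
        simp [List.ofFn_succ]
      have hw : (α ^ n)⁻¹ • ((List.ofFn fun i : Fin n => M i.succ).prod *ᵥ v)
          ∈ convLe m X := ih _ (fun i => hM i.succ)
      have := convLe_step m α hα X (M 0) (hA _ (hM 0))
        (fun x hx => hstep x hx (M 0) (hM 0)) _ hw
      have heq : α⁻¹ • ((M 0) *ᵥ ((α ^ n)⁻¹ • ((List.ofFn fun i : Fin n => M i.succ).prod *ᵥ v)))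
          = (α ^ (n+1))⁻¹ • ((List.ofFn M).prod *ᵥ v) := by
        rw [hlist, List.prod_cons, Matrix.mulVec_smul, smul_smul, ← Matrix.mulVec_mulVec]
        ring_nf
      rwa [heq] at this
  refine ⟨(∑ i, p i * B) + 1, fun n M hM => ?_⟩
  obtain ⟨hw0, hwle⟩ := key n M hM
  have hdot : p ⬝ᵥ ((α ^ n)⁻¹ • ((List.ofFn M).prod *ᵥ v)) ≤ ∑ i, p i * B := by
    simp only [dotProduct]
    exact Finset.sum_le_sum fun i _ =>
      mul_le_mul_of_nonneg_left (hcoord _ (key n M hM) i) (hp i)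
  have hpos : (0:ℝ) < α ^ n := pow_pos hα n
  have hdp : p ⬝ᵥ ((List.ofFn M).prod *ᵥ v)
      = α ^ n * (p ⬝ᵥ ((α ^ n)⁻¹ • ((List.ofFn M).prod *ᵥ v))) := by
    rw [dotProduct_smul, smul_eq_mul]
    field_simp
  rw [hdp]
  calc α ^ n * (p ⬝ᵥ ((α ^ n)⁻¹ • ((List.ofFn M).prod *ᵥ v)))
      ≤ α ^ n * (∑ i, p i * B) := by
        exact mul_le_mul_of_nonneg_left hdot hpos.le
    _ < ((∑ i, p i * B) + 1) * α ^ n := by nlinarith
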